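/- Let R be a finite commutative local principal ring. A matrix A ∈ M₂(R) is a product of two idempotent matrices if and only if A = I or A is conjugate under GL₂(R) to a matrix M(a,b) with first row (a,b) and zero second row, for some a, b ∈ R. -/

import Mathlib

lemma dvd_total_aux (R : Type*) [CommRing R] [Finite R] [IsLocalRing R]
    [IsPrincipalIdealRing R] (a b : R) : a ∣ b ∨ b ∣ a := by
  classical
  obtain ⟨n, hn⟩ : ∃ n, (IsLocalRing.maximalIdeal R) ^ n = 0 := by
    obtain ⟨n, hn⟩ := IsArtinianRing.isNilpotent_jacobson_bot (R := R)
    rw [IsLocalRing.jacobson_eq_maximalIdeal ⊥ bot_ne_top] at hn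
    exact ⟨n, hn⟩
  obtain ⟨π, hπ⟩ := (IsPrincipalIdealRing.principal (IsLocalRing.maximalIdeal R)).principal
  rw [Ideal.submodule_span_eq] at hπ
  -- every nonzero element is unit * π^k
  have key : ∀ x : R, x ≠ 0 → ∃ (k : ℕ) (u : Rˣ), x = (u : R) * π ^ k := by
    intro x hx
    set P : ℕ → Prop := fun k => x ∈ (IsLocalRing.maximalIdeal R) ^ k with hP
    have hP0 : P 0 := by simp [hP]
    have hPn : ¬ P n := by simp [hP, hn, hx]
    set k := Nat.findGreatest P n with hk
    have hPk : P k := Nat.findGreatest_spec (Nat.zero_le n) hP0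
    have hklt : k < n := by
      rcases lt_or_eq_of_le (Nat.findGreatest_le n : k ≤ n) with h | h
      · exact h
      · exact absurd (h ▸ hPk) hPn
    have hnot : ¬ P (k + 1) := Nat.findGreatest_is_greatest (Nat.lt_succ_self k) hklt
    rw [hP] at hPk hnot
    rw [hπ, Ideal.span_singleton_pow, Ideal.mem_span_singleton] at hPk
    obtain ⟨c, hc⟩ := hPk
    have hcu : IsUnit c := by
      by_contra hcu
      apply hnot
      rw [hπ, Ideal.span_singleton_pow, Ideal.mem_span_singleton]
      have : c ∈ IsLocalRing.maximalIdeal R := hcu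
      rw [hπ, Ideal.mem_span_singleton] at this
      obtain ⟨d, hd⟩ := this
      exact ⟨d, by rw [hc, hd]; ring⟩
    obtain ⟨u, hu⟩ := hcu
    exact ⟨k, u, by rw [hc, ← hu]; ring⟩
  rcases eq_or_ne a 0 with ha | ha
  · right; simp [ha]
  rcases eq_or_ne b 0 with hb | hb
  · left; simp [hb]
  obtain ⟨j, u, hu⟩ := key a ha
  obtain ⟨k, v, hv⟩ := key b hb
  rcases le_total j k with h | h
  · left
    exact ⟨(v : R) * (u⁻¹ : Rˣ) * π ^ (k - j), by
      rw [hu, hv, ← Nat.add_sub_cancel' h, pow_add]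
      have hu' := u.mul_inv; simp only [Nat.add_sub_cancel_left]
      linear_combination (-(v : R) * π ^ j * π ^ (k - j)) * hu'⟩
  · right
    exact ⟨(u : R) * (v⁻¹ : Rˣ) * π ^ (j - k), by
      rw [hu, hv, ← Nat.add_sub_cancel' h, pow_add]
      have hv' := v.mul_inv; simp only [Nat.add_sub_cancel_left]
      linear_combination (-(u : R) * π ^ k * π ^ (j - k)) * hv'⟩


lemma unit_entry_of_idem (R : Type*) [CommRing R] [Finite R] [IsLocalRing R]
    (F : Matrix (Fin 2) (Fin 2) R) (hF : IsIdempotentElem F) (h0 : F ≠ 0) :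
    ∃ i j, IsUnit (F i j) := by
  by_contra hcon
  push_neg at hcon
  obtain ⟨n, hn⟩ : ∃ n, (IsLocalRing.maximalIdeal R) ^ n = 0 := by
    obtain ⟨n, hn⟩ := IsArtinianRing.isNilpotent_jacobson_bot (R := R)
    rw [IsLocalRing.jacobson_eq_maximalIdeal ⊥ bot_ne_top] at hn
    exact ⟨n, hn⟩
  have hmem : ∀ i j, F i j ∈ IsLocalRing.maximalIdeal R := fun i j => hcon i j
  have hpow : ∀ k, ∀ i j, (F ^ (k+1)) i j ∈ (IsLocalRing.maximalIdeal R) ^ (k+1) := by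
    intro k
    induction k with
    | zero => intro i j; simpa using hmem i j
    | succ m ih =>
      intro i j
      have : F ^ (m + 1 + 1) = F ^ (m+1) * F := by rw [pow_succ]
      rw [this, Matrix.mul_apply]
      apply Ideal.sum_mem
      intro l _
      rw [pow_succ]
      exact Ideal.mul_mem_mul (ih i l) (hmem l j)
  have hFn : F ^ (n + 1) = F := hF.pow_succ_eq n
  apply h0
  ext i j
  have hm := hpow n i j
  rw [hFn] at hm
  have hle : (IsLocalRing.maximalIdeal R) ^ (n+1) ≤ (IsLocalRing.maximalIdeal R) ^ n :=
    Ideal.pow_le_pow_right (Nat.le_succ n)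
  have hm2 := hle hm
  rw [hn] at hm2
  simpa using hm2

lemma idem_conj (R : Type*) [CommRing R] [Finite R] [IsLocalRing R]
    (E : Matrix (Fin 2) (Fin 2) R) (hE : IsIdempotentElem E) (h1 : E ≠ 1) :
    ∃ (a b : R) (P : (Matrix (Fin 2) (Fin 2) R)ˣ),
      E = (P : Matrix (Fin 2) (Fin 2) R) * !![a, b; 0, 0] *
        ((P⁻¹ : _) : Matrix (Fin 2) (Fin 2) R) := by
  have hFidem : IsIdempotentElem (1 - E) := hE.one_sub
  have hF0 : (1 : Matrix (Fin 2) (Fin 2) R) - E ≠ 0 := sub_ne_zero.mpr (Ne.symm h1)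
  obtain ⟨i, j, hij⟩ := unit_entry_of_idem R (1 - E) hFidem hF0
  set F := (1 : Matrix (Fin 2) (Fin 2) R) - E with hFdef
  have hFE : F * E = 0 := by
    rw [hFdef, sub_mul, one_mul, hE, sub_self]
  have hrow : ∀ l, F i 0 * E 0 l + F i 1 * E 1 l = 0 := by
    intro l
    have := congrFun (congrFun hFE i) l
    simpa [Matrix.mul_apply, Fin.sum_univ_two] using this
  obtain ⟨Q, hQu, hQ0, hQ1⟩ : ∃ Q : Matrix (Fin 2) (Fin 2) R,
      IsUnit Q.det ∧ Q 1 0 = F i 0 ∧ Q 1 1 = F i 1 := by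
    fin_cases j
    · refine ⟨!![0, 1; F i 0, F i 1], ?_, rfl, rfl⟩
      have hd : (!![0, 1; F i 0, F i 1]).det = -(F i 0) := by simp [Matrix.det_fin_two]
      rw [hd]; exact IsUnit.neg hij
    · refine ⟨!![1, 0; F i 0, F i 1], ?_, rfl, rfl⟩
      have hd : (!![1, 0; F i 0, F i 1]).det = F i 1 := by simp [Matrix.det_fin_two]
      rw [hd]; exact hij
  obtain ⟨u, hu⟩ := (Matrix.isUnit_iff_isUnit_det Q).mpr hQu
  have hVU : (↑u⁻¹ : Matrix (Fin 2) (Fin 2) R) * (↑u : Matrix (Fin 2) (Fin 2) R) = 1 := u.inv_mul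
  set N : Matrix (Fin 2) (Fin 2) R :=
    (↑u : Matrix (Fin 2) (Fin 2) R) * E * (↑u⁻¹ : Matrix (Fin 2) (Fin 2) R) with hN
  have huQ : ∀ l, (u : Matrix (Fin 2) (Fin 2) R) 1 l = Q 1 l := by rw [hu]; intro l; rfl
  have hQE : ∀ l, ((u : Matrix (Fin 2) (Fin 2) R) * E) 1 l = 0 := by
    intro l
    rw [Matrix.mul_apply, Fin.sum_univ_two, huQ 0, huQ 1, hQ0, hQ1]
    exact hrow l
  have hNrow : ∀ l, N 1 l = 0 := by
    intro l
    rw [hN, Matrix.mul_apply, Fin.sum_univ_two, hQE 0, hQE 1]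
    ring
  refine ⟨N 0 0, N 0 1, u⁻¹, ?_⟩
  have hNeta : N = !![N 0 0, N 0 1; 0, 0] := by
    conv_lhs => rw [Matrix.eta_fin_two N]
    rw [hNrow 0, hNrow 1]
  have key : (↑u⁻¹ : Matrix (Fin 2) (Fin 2) R) * N * (↑u : Matrix (Fin 2) (Fin 2) R) = E := by
    rw [hN]
    simp only [← mul_assoc]
    rw [hVU, one_mul, mul_assoc, hVU, mul_one]
  rw [inv_inv, ← key, ← hNeta]


lemma row_prod_idem (R : Type*) [CommRing R] (a b : R) (h : a ∣ b ∨ b ∣ a) :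
    ∃ E₁ E₂ : Matrix (Fin 2) (Fin 2) R,
      IsIdempotentElem E₁ ∧ IsIdempotentElem E₂ ∧ (!![a, b; 0, 0] : Matrix (Fin 2) (Fin 2) R) = E₁ * E₂ := by
  rcases h with ⟨t, ht⟩ | ⟨r, hr⟩
  · -- b = a * t
    refine ⟨!![1, t+1; 0, 0], !![1-t*a+t, t*(1-t*a+t); a-1, t*a-t], ?_, ?_, ?_⟩
    · show _ * _ = _
      rw [Matrix.mul_fin_two]; congr 1 <;> ring
    · show _ * _ = _
      rw [Matrix.mul_fin_two]; congr 1 <;> ring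
    · rw [Matrix.mul_fin_two, ht]; congr 1 <;> ring
  · -- a = b * r
    refine ⟨!![1, b; 0, 0], !![0, 0; r, 1], ?_, ?_, ?_⟩
    · show _ * _ = _
      rw [Matrix.mul_fin_two]; congr 1 <;> ring
    · show _ * _ = _
      rw [Matrix.mul_fin_two]; congr 1 <;> ring
    · rw [Matrix.mul_fin_two, hr]; congr 1 <;> ring


lemma conj_idem {R : Type*} [CommRing R] (u : (Matrix (Fin 2) (Fin 2) R)ˣ)
    (E : Matrix (Fin 2) (Fin 2) R) (hE : IsIdempotentElem E) :
    IsIdempotentElem ((↑u : Matrix (Fin 2) (Fin 2) R) * E * (↑u⁻¹ : Matrix (Fin 2) (Fin 2) R)) := by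
  set U : Matrix (Fin 2) (Fin 2) R := ↑u
  set V : Matrix (Fin 2) (Fin 2) R := ↑u⁻¹
  have h : V * U = 1 := u.inv_mul
  show (U * E * V) * (U * E * V) = U * E * V
  have ha : (U * E * V) * (U * E * V) = U * (E * (V * U) * E) * V := by noncomm_ring
  rw [ha, h, mul_one, hE]

/-- Over a finite commutative local principal ring, `A ∈ M₂(R)` is a product of two
idempotent matrices iff `A = I` or `A` is `GL₂(R)`-conjugate to some `M(a,b)`. -/
theorem product_of_two_idempotents_iff (R : Type*) [CommRing R] [Finite R] [IsLocalRing R]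
    [IsPrincipalIdealRing R] (A : Matrix (Fin 2) (Fin 2) R) :
    (∃ E₁ E₂ : Matrix (Fin 2) (Fin 2) R,
        IsIdempotentElem E₁ ∧ IsIdempotentElem E₂ ∧ A = E₁ * E₂) ↔
      (A = 1 ∨ ∃ (a b : R) (P : (Matrix (Fin 2) (Fin 2) R)ˣ),
        A = (P : Matrix (Fin 2) (Fin 2) R) * !![a, b; 0, 0] *
          ((P⁻¹ : _) : Matrix (Fin 2) (Fin 2) R)) := by
  constructor
  · rintro ⟨E₁, E₂, h1, h2, hA⟩
    by_cases hE1 : E₁ = 1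
    · subst hE1
      rw [one_mul] at hA
      by_cases hE2 : E₂ = 1
      · left; rw [hA, hE2]
      · right
        obtain ⟨a, b, P, hP⟩ := idem_conj R E₂ h2 hE2
        exact ⟨a, b, P, hA ▸ hP⟩
    · right
      obtain ⟨a, b, P, hP⟩ := idem_conj R E₁ h1 hE1
      set U : Matrix (Fin 2) (Fin 2) R := ↑P
      set V : Matrix (Fin 2) (Fin 2) R := ↑P⁻¹
      have hVU : V * U = 1 := P.inv_mul
      set X : Matrix (Fin 2) (Fin 2) R := V * E₂ * U with hX
      refine ⟨a * X 0 0 + b * X 1 0, a * X 0 1 + b * X 1 1, P, ?_⟩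
      have hmul : (!![a, b; 0, 0] : Matrix (Fin 2) (Fin 2) R) * X =
          !![a * X 0 0 + b * X 1 0, a * X 0 1 + b * X 1 1; 0, 0] := by
        conv_lhs => rw [Matrix.eta_fin_two X]
        rw [Matrix.mul_fin_two]
        congr 1 <;> ring
      calc A = U * !![a, b; 0, 0] * V * E₂ := by rw [hA, hP]
        _ = U * (!![a, b; 0, 0] * (V * E₂ * U)) * V := by
              have : U * (!![a, b; 0, 0] * (V * E₂ * U)) * V
                  = U * !![a, b; 0, 0] * V * E₂ * (U * V) := by noncomm_ring
              rw [this, P.mul_inv, mul_one]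
        _ = U * !![a * X 0 0 + b * X 1 0, a * X 0 1 + b * X 1 1; 0, 0] * V := by
              rw [← hX, hmul]
  · rintro (h1 | ⟨a, b, P, hP⟩)
    · exact ⟨1, 1, IsIdempotentElem.one, IsIdempotentElem.one, by rw [h1, one_mul]⟩
    · obtain ⟨E₁, E₂, h1, h2, hM⟩ := row_prod_idem R a b (dvd_total_aux R a b)
      set U : Matrix (Fin 2) (Fin 2) R := ↑P
      set V : Matrix (Fin 2) (Fin 2) R := ↑P⁻¹
      have hVU : V * U = 1 := P.inv_mul
      refine ⟨U * E₁ * V, U * E₂ * V, conj_idem P E₁ h1, conj_idem P E₂ h2, ?_⟩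
      have : (U * E₁ * V) * (U * E₂ * V) = U * (E₁ * (V * U) * E₂) * V := by noncomm_ring
      rw [this, hVU, mul_one, ← hM, hP]
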